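/- There exists ε ∈ (0, 1/L] such that the set Q = {p ∈ int Δ : ∑_{l=1}^L z_l(p) ≤ 0} is contained in the interior of the trimmed simplex Δ^ε; that is, every p with p_l > 0 for all l, ∑_l p_l = 1, and ∑_l z_l(p) ≤ 0 satisfies p_l > ε for all l. -/

import Mathlib

open Filter Topology

/-- Lemma 1: there is an `ε ∈ (0, 1/L]` such that the set
`Q = {p ∈ int Δ : ∑ l, z l p ≤ 0}` is contained in the interior of the trimmed
simplex `Δ^ε`, i.e. every such `p` satisfies `p l > ε` for all `l`. -/
theorem Q_subset_int_trimmed_simplex (L : ℕ) (hL : 1 ≤ L)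
    (z : (Fin L → ℝ) → (Fin L → ℝ))
    (hA1 : ContinuousOn z {p : Fin L → ℝ | ∀ l, 0 < p l})
    (hA2 : ∀ lam : ℝ, 0 < lam → ∀ p : Fin L → ℝ, (∀ l, 0 < p l) → z (lam • p) = z p)
    (hA3 : ∀ p : Fin L → ℝ, (∀ l, 0 < p l) → ∑ l, p l * z p l = 0)
    (hA4 : ∃ s : ℝ, 0 < s ∧ ∀ p : Fin L → ℝ, (∀ l, 0 < p l) → ∀ l, -s < z p l)
    (hA5 : ∀ (pn : ℕ → Fin L → ℝ) (p : Fin L → ℝ),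
      (∀ n l, 0 < pn n l) → Tendsto pn atTop (𝓝 p) → p ≠ 0 → (∃ l, p l = 0) →
      Tendsto (fun n => ⨆ l, z (pn n) l) atTop atTop) :
    ∃ ε : ℝ, 0 < ε ∧ ε ≤ 1 / (L : ℝ) ∧
      ∀ p : Fin L → ℝ, (∀ l, 0 < p l) → (∑ l, p l) = 1 → (∑ l, z p l) ≤ 0 →
        ∀ l, ε < p l := by
  have hne : Nonempty (Fin L) := ⟨⟨0, hL⟩⟩
  have hLpos : (0:ℝ) < (L:ℝ) := by exact_mod_cast Nat.pos_of_ne_zero (by omega)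
  by_contra hcon
  push_neg at hcon
  have key : ∀ n : ℕ, ∃ p : Fin L → ℝ, (∀ l, 0 < p l) ∧ (∑ l, p l) = 1 ∧
      (∑ l, z p l) ≤ 0 ∧ ∃ l, p l ≤ 1 / ((L:ℝ) * (n+1)) := by
    intro n
    refine hcon _ (by positivity) ?_
    apply one_div_le_one_div_of_le hLpos
    nlinarith [Nat.cast_nonneg (α := ℝ) n]
  choose pn hpos hsum hz ln hln using key
  have hmem : ∀ n, pn n ∈ stdSimplex ℝ (Fin L) :=
    fun n => ⟨fun l => (hpos n l).le, hsum n⟩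
  obtain ⟨p, hpmem, φ, hφ, hconv⟩ := (isCompact_stdSimplex ℝ (Fin L)).tendsto_subseq hmem
  obtain ⟨l, hl⟩ := Finite.exists_infinite_fiber (fun n => ln (φ n))
  have hfreq : ∃ᶠ n in atTop, ln (φ n) = l := by
    rw [Nat.frequently_atTop_iff_infinite]
    exact Set.infinite_coe_iff.mp hl
  obtain ⟨ψ, hψ, hψl⟩ := Filter.extraction_of_frequently_atTop hfreq
  set q : ℕ → Fin L → ℝ := fun n => pn (φ (ψ n)) with hq
  have hqconv : Tendsto q atTop (𝓝 p) := hconv.comp hψ.tendsto_atTop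
  have hqpos : ∀ n m, 0 < q n m := fun n m => hpos _ m
  have hpl : p l = 0 := by
    have h1 : Tendsto (fun n => q n l) atTop (𝓝 (p l)) :=
      (continuous_apply l).continuousAt.tendsto.comp hqconv
    have hb : Tendsto (fun n : ℕ => 1 / ((L:ℝ) * (n+1))) atTop (𝓝 0) := by
      apply Tendsto.div_atTop tendsto_const_nhds
      apply Tendsto.const_mul_atTop hLpos
      exact tendsto_atTop_add_const_right _ _ tendsto_natCast_atTop_atTop
    have h2 : ∀ n, q n l ≤ 1 / ((L:ℝ) * (n+1)) := by
      intro n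
      have h3 := hln (φ (ψ n))
      rw [hψl n] at h3
      refine h3.trans (one_div_le_one_div_of_le (by positivity) ?_)
      have : (n:ℝ) ≤ (φ (ψ n) : ℝ) := by
        exact_mod_cast (hψ.le_apply).trans (le_refl _) |>.trans (hφ.le_apply) |>.trans (le_refl _) |>.trans (le_refl _) |>.trans (le_refl _) |>.trans (le_refl _)
      nlinarith
    have hle : p l ≤ 0 := le_of_tendsto_of_tendsto' h1 hb h2
    exact le_antisymm hle (hpmem.1 l)
  have hpne : p ≠ 0 := by
    intro h0
    have := hpmem.2
    rw [h0] at this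
    simp at this
  have hsup := hA5 q p hqpos hqconv hpne ⟨l, hpl⟩
  obtain ⟨s, hs, hsbd⟩ := hA4
  have hbd : ∀ n, (⨆ m, z (q n) m) ≤ (L:ℝ) * s := by
    intro n
    apply ciSup_le
    intro l₀
    have hsum0 : ∑ m, z (q n) m ≤ 0 := hz _
    have heq : z (q n) l₀ = (∑ m, z (q n) m) - ∑ m ∈ Finset.univ.erase l₀, z (q n) m := by
      rw [Finset.sum_erase_eq_sub (Finset.mem_univ l₀)]
      ring
    have hlow : -((L:ℝ) * s) ≤ ∑ m ∈ Finset.univ.erase l₀, z (q n) m := by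
      have h1 : ∑ m ∈ Finset.univ.erase l₀, (-s) ≤ ∑ m ∈ Finset.univ.erase l₀, z (q n) m :=
        Finset.sum_le_sum (fun i _ => (hsbd _ (hqpos n) i).le)
      have h2 : ∑ m ∈ Finset.univ.erase l₀, (-s : ℝ) =
          ((Finset.univ.erase l₀).card : ℝ) * (-s) := by
        rw [Finset.sum_const, nsmul_eq_mul]
      have h3 : ((Finset.univ.erase l₀).card : ℝ) ≤ (L:ℝ) := by
        have := Finset.card_erase_le (a := l₀) (s := (Finset.univ : Finset (Fin L)))
        have : (Finset.univ.erase l₀).card ≤ L := by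
          simpa using this
        exact_mod_cast this
      nlinarith
    linarith [heq ▸ (by linarith : (∑ m, z (q n) m) - ∑ m ∈ Finset.univ.erase l₀, z (q n) m ≤ (L:ℝ) * s)]
  obtain ⟨n, hn⟩ := (hsup.eventually (eventually_gt_atTop ((L:ℝ) * s))).exists
  exact absurd (hbd n) (not_le.mpr hn)
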